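/- Let N be a nonempty finite set and let f : 2^N → ℝ ∪ {-∞} be a set function whose effective domain dom f = {X ⊆ N : f(X) > -∞} is nonempty. If f is M♮-concave, then its conjugate function g(p) = max{ f(X) − p(X) : X ⊆ N } is submodular on ℝ^N. -/
import Mathlib


open Finset

/-- A set function `f : 2^N → ℝ ∪ {-∞}` is M♮-concave if for any `X, Y` in the
effective domain and any `i ∈ X \ Y`, either
`f(X) + f(Y) ≤ f(X - i) + f(Y + i)`, or there exists `j ∈ Y \ X` with
`f(X) + f(Y) ≤ f(X - i + j) + f(Y + i - j)`. -/
def MNatConcave {N : Type*} [DecidableEq N] (f : Finset N → WithBot ℝ) : Prop :=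
  ∀ X Y : Finset N, f X ≠ ⊥ → f Y ≠ ⊥ → ∀ i ∈ X \ Y,
    (f X + f Y ≤ f (X.erase i) + f (insert i Y)) ∨
    ∃ j ∈ Y \ X, f X + f Y ≤ f (insert j (X.erase i)) + f ((insert i Y).erase j)

section Aux

variable {N : Type*} [Fintype N] [DecidableEq N]
  {f : Finset N → WithBot ℝ} {g : (N → ℝ) → ℝ}

private lemma coe_sub_sum' (x s : ℝ) :
    ((x : WithBot ℝ) + ((-s : ℝ) : WithBot ℝ)) = ((x - s : ℝ) : WithBot ℝ) := by
  rw [← WithBot.coe_add, sub_eq_add_neg]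

private lemma exchange_real' {A B : Finset N} {x y : ℝ}
    (h : ((x + y : ℝ) : WithBot ℝ) ≤ f A + f B) :
    ∃ x1 y1 : ℝ, f A = (x1 : ℝ) ∧ f B = (y1 : ℝ) ∧ x + y ≤ x1 + y1 := by
  have hA : f A ≠ ⊥ := by
    intro hA
    rw [hA, WithBot.bot_add] at h
    exact absurd h (by simp)
  have hB : f B ≠ ⊥ := by
    intro hB
    rw [hB, WithBot.add_bot] at h
    exact absurd h (by simp)
  obtain ⟨x1, hx1⟩ := WithBot.ne_bot_iff_exists.mp hA
  obtain ⟨y1, hy1⟩ := WithBot.ne_bot_iff_exists.mp hB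
  refine ⟨x1, y1, hx1.symm, hy1.symm, ?_⟩
  rw [← hx1, ← hy1] at h
  exact_mod_cast h

variable (hg : ∀ p : N → ℝ,
      (g p : WithBot ℝ) =
        (Finset.univ : Finset (Finset N)).sup
          (fun X => f X + ((-(∑ i ∈ X, p i) : ℝ) : WithBot ℝ)))

include hg

private lemma le_g' (p : N → ℝ) (X : Finset N) (x : ℝ) (hx : f X = (x : ℝ)) :
    x - ∑ k ∈ X, p k ≤ g p := by
  have h := Finset.le_sup (f := fun X => f X + ((-(∑ i ∈ X, p i) : ℝ) : WithBot ℝ))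
    (Finset.mem_univ X)
  rw [← hg p] at h
  simp only [hx] at h
  rw [coe_sub_sum'] at h
  exact_mod_cast h

private lemma exists_max' (p : N → ℝ) :
    ∃ (X : Finset N) (x : ℝ), f X = (x : ℝ) ∧ g p = x - ∑ k ∈ X, p k := by
  obtain ⟨X, -, hX⟩ := Finset.exists_mem_eq_sup Finset.univ ⟨∅, Finset.mem_univ _⟩
    (fun X => f X + ((-(∑ i ∈ X, p i) : ℝ) : WithBot ℝ))
  rw [← hg p] at hX
  have hne : f X ≠ ⊥ := by
    intro h
    rw [h, WithBot.bot_add] at hX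
    exact absurd hX (by simp)
  obtain ⟨x, hx⟩ := WithBot.ne_bot_iff_exists.mp hne
  refine ⟨X, x, hx.symm, ?_⟩
  rw [← hx, coe_sub_sum'] at hX
  exact_mod_cast hX

private lemma step_lemma' (hf : MNatConcave f)
    (a b : N → ℝ) (hab : ∀ k, a k ≤ b k) (i : N) (hi : a i = b i)
    (t : ℝ) (ht : 0 ≤ t) :
    g a + g (Function.update b i (b i + t)) ≤ g (Function.update a i (a i + t)) + g b := by
  set a' := Function.update a i (a i + t) with ha'
  set b' := Function.update b i (b i + t) with hb'
  obtain ⟨X, x, hX, hgx⟩ := exists_max' hg a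
  obtain ⟨Y, y, hY, hgy⟩ := exists_max' hg b'
  have sum_upd_not : ∀ (c : N → ℝ) (v : ℝ) (S : Finset N), i ∉ S →
      ∑ k ∈ S, Function.update c i v k = ∑ k ∈ S, c k := by
    intro c v S hS
    exact Finset.sum_congr rfl fun k hk => Function.update_of_ne (by rintro rfl; exact hS hk) _ _
  have sum_upd_mem : ∀ (c : N → ℝ) (v : ℝ) (S : Finset N), i ∈ S →
      ∑ k ∈ S, Function.update c i v k = ∑ k ∈ S, c k - c i + v := by
    intro c v S hS
    rw [Finset.sum_update_of_mem hS, Finset.sdiff_singleton_eq_erase,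
      Finset.sum_erase_eq_sub hS]
    ring
  by_cases hiX : i ∈ X
  · by_cases hiY : i ∈ Y
    · -- i ∈ X, i ∈ Y
      have h1 : x - ∑ k ∈ X, a' k ≤ g a' := le_g' hg a' X x hX
      rw [ha', sum_upd_mem a _ X hiX] at h1
      have h2 : y - ∑ k ∈ Y, b k ≤ g b := le_g' hg b Y y hY
      have hsum : ∑ k ∈ Y, b' k = ∑ k ∈ Y, b k - b i + (b i + t) := sum_upd_mem b _ Y hiY
      rw [hsum] at hgy
      linarith
    · -- i ∈ X \ Y : exchange
      have hmem : i ∈ X \ Y := Finset.mem_sdiff.mpr ⟨hiX, hiY⟩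
      have hXb : f X ≠ ⊥ := by rw [hX]; exact WithBot.coe_ne_bot
      have hYb : f Y ≠ ⊥ := by rw [hY]; exact WithBot.coe_ne_bot
      have hsumY : ∑ k ∈ Y, b' k = ∑ k ∈ Y, b k := sum_upd_not b _ Y hiY
      rw [hsumY] at hgy
      rcases hf X Y hXb hYb i hmem with h | ⟨j, hj, h⟩
      · rw [hX, hY, ← WithBot.coe_add] at h
        obtain ⟨x1, y1, hx1, hy1, hxy⟩ := exchange_real' h
        have h1 : x1 - ∑ k ∈ X.erase i, a' k ≤ g a' := le_g' hg a' _ x1 hx1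
        rw [ha', sum_upd_not a _ _ (Finset.notMem_erase i X),
          Finset.sum_erase_eq_sub hiX] at h1
        have h2 : y1 - ∑ k ∈ insert i Y, b k ≤ g b := le_g' hg b _ y1 hy1
        rw [Finset.sum_insert hiY] at h2
        linarith
      · obtain ⟨hjY, hjX⟩ := Finset.mem_sdiff.mp hj
        have hji : j ≠ i := fun hh => hiY (hh ▸ hjY)
        rw [hX, hY, ← WithBot.coe_add] at h
        obtain ⟨x1, y1, hx1, hy1, hxy⟩ := exchange_real' h
        have hinot : i ∉ insert j (X.erase i) := by
          simp [hji.symm, Finset.notMem_erase]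
        have hjnot : j ∉ X.erase i := fun hh => hjX (Finset.mem_of_mem_erase hh)
        have h1 : x1 - ∑ k ∈ insert j (X.erase i), a' k ≤ g a' := le_g' hg a' _ x1 hx1
        rw [ha', sum_upd_not a _ _ hinot, Finset.sum_insert hjnot,
          Finset.sum_erase_eq_sub hiX] at h1
        have hjmem : j ∈ insert i Y := Finset.mem_insert_of_mem hjY
        have h2 : y1 - ∑ k ∈ (insert i Y).erase j, b k ≤ g b := le_g' hg b _ y1 hy1
        rw [Finset.sum_erase_eq_sub hjmem, Finset.sum_insert hiY] at h2
        have habj : a j ≤ b j := hab j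
        linarith
  · -- i ∉ X
    have h1 : x - ∑ k ∈ X, a' k ≤ g a' := le_g' hg a' X x hX
    rw [ha', sum_upd_not a _ X hiX] at h1
    have h2 : y - ∑ k ∈ Y, b k ≤ g b := le_g' hg b Y y hY
    have hsum : ∑ k ∈ Y, b k ≤ ∑ k ∈ Y, b' k := by
      apply Finset.sum_le_sum
      intro k hk
      by_cases hki : k = i
      · subst hki; rw [hb', Function.update_self]; linarith
      · rw [hb', Function.update_of_ne hki]
    linarith

end Aux

/-- If `f` is M♮-concave, then its conjugate
`g(p) = max { f(X) - p(X) : X ⊆ N }` is submodular. -/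
theorem conjugate_submodular_of_mnat_concave
    {N : Type*} [Fintype N] [DecidableEq N] [Nonempty N]
    (f : Finset N → WithBot ℝ) (hdom : ∃ X : Finset N, f X ≠ ⊥)
    (g : (N → ℝ) → ℝ)
    (hg : ∀ p : N → ℝ,
      (g p : WithBot ℝ) =
        (Finset.univ : Finset (Finset N)).sup
          (fun X => f X + ((-(∑ i ∈ X, p i) : ℝ) : WithBot ℝ)))
    (hf : MNatConcave f) :
    ∀ p q : N → ℝ, g (p ⊔ q) + g (p ⊓ q) ≤ g p + g q := by
  suffices h : ∀ (n : ℕ) (p q : N → ℝ),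
      (Finset.univ.filter fun i => q i < p i).card ≤ n →
      g (p ⊔ q) + g (p ⊓ q) ≤ g p + g q by
    intro p q
    exact h _ p q le_rfl
  intro n
  induction n with
  | zero =>
    intro p q hc
    have hle : p ≤ q := by
      intro i
      by_contra hlt
      push_neg at hlt
      have hmem : i ∈ Finset.univ.filter (fun i => q i < p i) := by simp [hlt]
      rw [Finset.card_eq_zero.mp (Nat.le_zero.mp hc)] at hmem
      exact absurd hmem (Finset.notMem_empty i)
    rw [sup_eq_right.mpr hle, inf_eq_left.mpr hle]
    linarith
  | succ n ih =>
    intro p q hc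
    by_cases hall : p ≤ q
    · rw [sup_eq_right.mpr hall, inf_eq_left.mpr hall]
      linarith
    · have : ∃ i, q i < p i := by
        by_contra hno
        push_neg at hno
        exact hall fun i => hno i
      obtain ⟨i, hi⟩ := this
      clear hall
      set p' := Function.update p i (q i) with hp'
      have hfeq : (Finset.univ.filter fun j => q j < p' j)
          = (Finset.univ.filter fun j => q j < p j).erase i := by
        ext j
        by_cases hji : j = i
        · subst hji
          simp [hp', Function.update_self]
        · simp [hp', Function.update_of_ne hji, hji]
      have himem : i ∈ Finset.univ.filter fun j => q j < p j := by simp [hi]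
      have hcard : (Finset.univ.filter fun j => q j < p' j).card ≤ n := by
        rw [hfeq, Finset.card_erase_of_mem himem]
        omega
      have hih := ih p' q hcard
      have hab : ∀ k, p' k ≤ (p' ⊔ q) k := fun k => le_sup_left
      have hieq : p' i = (p' ⊔ q) i := by
        simp [hp', Pi.sup_apply, Function.update_self]
      have hstep := step_lemma' hg hf p' (p' ⊔ q) hab i hieq (p i - q i) (sub_nonneg.mpr hi.le)
      have e1 : Function.update p' i (p' i + (p i - q i)) = p := by
        funext j
        by_cases hji : j = i
        · subst hji
          simp [hp', Function.update_self]
        · simp [hp', Function.update_of_ne hji]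
      have e2 : Function.update (p' ⊔ q) i ((p' ⊔ q) i + (p i - q i)) = p ⊔ q := by
        funext j
        by_cases hji : j = i
        · subst hji
          simp only [Function.update_self, Pi.sup_apply, hp', Function.update_self]
          rw [sup_idem, sup_eq_left.mpr (le_of_lt hi)]
          ring
        · simp [hp', Pi.sup_apply, Function.update_of_ne hji]
      have e3 : p' ⊓ q = p ⊓ q := by
        funext j
        by_cases hji : j = i
        · subst hji
          simp only [Pi.inf_apply, hp', Function.update_self]
          rw [inf_idem, inf_eq_right.mpr (le_of_lt hi)]
        · simp [hp', Pi.inf_apply, Function.update_of_ne hji]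
      rw [e1, e2] at hstep
      rw [e3] at hih
      linarith
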